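/- Let φ be a singular-expansive flow on a compact metric space X. If Sing(φ) is empty, or consists of finitely many points each of which is an isolated point of X, then φ is expansive. -/

import Mathlib

open Set Metric Filter
open scoped Classical

variable {X : Type*}

/-- A (continuous) flow on a topological space, given as a map `φ : ℝ → X → X`. -/
def IsFlowMap [TopologicalSpace X] (φ : ℝ → X → X) : Prop :=
  Continuous (fun p : ℝ × X => φ p.1 p.2) ∧ (∀ x : X, φ 0 x = x) ∧
    ∀ t s : ℝ, ∀ x : X, φ (t + s) x = φ t (φ s x)

/-- The singular set of a flow. -/
def SingSet (φ : ℝ → X → X) : Set X := {x : X | ∀ t : ℝ, φ t x = x}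

/-- An increasing homeomorphism of `ℝ`: a strictly increasing continuous bijection. -/
def IncreasingHomeo (s : ℝ → ℝ) : Prop :=
  Continuous s ∧ StrictMono s ∧ Function.Bijective s

/-- Distance from a point to a set, with the convention that the distance
to the empty set is the diameter of the whole space. -/
noncomputable def distToSet [MetricSpace X] (z : X) (A : Set X) : ℝ :=
  if A = ∅ then Metric.diam (Set.univ : Set X) else Metric.infDist z A

/-- The orbit of a point under a flow. -/
def flowOrbit (φ : ℝ → X → X) (x : X) : Set X := Set.range fun t : ℝ => φ t x

/-- Bowen–Walters expansivity of a flow on a subset `Λ`. -/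
def ExpansiveOn [MetricSpace X] (φ : ℝ → X → X) (Λ : Set X) : Prop :=
  ∀ ε > (0:ℝ), ∃ δ > (0:ℝ), ∀ x ∈ Λ, ∀ y ∈ Λ, ∀ s : ℝ → ℝ, Continuous s → s 0 = 0 →
    (∀ t : ℝ, dist (φ t x) (φ (s t) y) ≤ δ) →
    ∃ τ ∈ Set.Icc (-ε) ε, y = φ τ x

/-- Komuro k*-expansivity of a flow on a subset `Λ`. -/
def KStarExpansiveOn [MetricSpace X] (φ : ℝ → X → X) (Λ : Set X) : Prop :=
  ∀ ε > (0:ℝ), ∃ δ > (0:ℝ), ∀ x ∈ Λ, ∀ y ∈ Λ, ∀ s : ℝ → ℝ,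
    IncreasingHomeo s → s 0 = 0 →
    (∀ t : ℝ, dist (φ t x) (φ (s t) y) ≤ δ) →
    ∃ t₀ : ℝ, ∃ τ ∈ Set.Icc (t₀ - ε) (t₀ + ε), φ (s t₀) y = φ τ x

/-- Singular expansivity of a flow on a subset `Λ`. -/
def SingularExpansiveOn [MetricSpace X] (φ : ℝ → X → X) (Λ : Set X) : Prop :=
  ∀ ε > (0:ℝ), ∃ δ > (0:ℝ), ∀ x ∈ Λ, ∀ y ∈ Λ, ∀ s : ℝ → ℝ, IncreasingHomeo s →
    (∀ t : ℝ, dist (φ t x) (φ (s t) y) ≤ δ * distToSet (φ t x) (SingSet φ)) →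
    ∃ t₀ : ℝ, ∃ τ ∈ Set.Icc (t₀ - ε) (t₀ + ε), φ (s t₀) y = φ τ x

/-- A periodic point of a flow: a nonsingular point with a positive period. -/
def IsPeriodicPoint (φ : ℝ → X → X) (x : X) : Prop :=
  x ∉ SingSet φ ∧ ∃ t : ℝ, 0 < t ∧ φ t x = x

/-- An invariant set `K` is dynamically isolated if it has a neighborhood `U`
with `K = ⋂_{t ∈ ℝ} φ_t(U)`. -/
def DynIsolated [TopologicalSpace X] (φ : ℝ → X → X) (K : Set X) : Prop :=
  ∃ U : Set X, K ⊆ interior U ∧ K = ⋂ t : ℝ, φ t '' U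

/-- Equicontinuity of a flow. -/
def EquicontinuousFlow [MetricSpace X] (φ : ℝ → X → X) : Prop :=
  ∀ ε > (0:ℝ), ∃ δ > (0:ℝ), ∀ x y : X, dist x y ≤ δ →
    ∀ t : ℝ, dist (φ t x) (φ t y) ≤ ε

/-- Singular equicontinuity of a flow. -/
def SingularEquicontinuous [MetricSpace X] (φ : ℝ → X → X) : Prop :=
  ∀ ε > (0:ℝ), ∃ δ > (0:ℝ), ∀ x y : X, dist x y ≤ δ * distToSet x (SingSet φ) →
    ∀ t : ℝ, dist (φ t x) (φ t y) ≤ ε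


section Helpers

open Topology

set_option linter.unusedSectionVars false
set_option linter.unusedVariables false



section AuxFlow2

variable [MetricSpace X] [CompactSpace X] (φ : ℝ → X → X)

/-- Uniform smallness of displacement for small times. -/
lemma flow_uniform_small
    (hφ : Continuous (fun p : ℝ × X => φ p.1 p.2) ∧ (∀ x : X, φ 0 x = x) ∧
      ∀ t s : ℝ, ∀ x : X, φ (t + s) x = φ t (φ s x))
    {a : ℝ} (ha : 0 < a) :
    ∃ R > 0, ∀ (z : X) (t : ℝ), |t| ≤ R → dist (φ t z) z ≤ a := by
  have hΨ : Continuous fun p : ℝ × X => dist (φ p.1 p.2) p.2 :=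
    (hφ.1).dist continuous_snd
  set W : Set (ℝ × X) := {p : ℝ × X | dist (φ p.1 p.2) p.2 < a} with hW
  have hWopen : IsOpen W := isOpen_lt hΨ continuous_const
  have hsub : ({(0 : ℝ)} : Set ℝ) ×ˢ (univ : Set X) ⊆ W := by
    rintro ⟨t, z⟩ ⟨ht, -⟩
    simp only [mem_singleton_iff] at ht
    simp only [hW, mem_setOf_eq, ht, hφ.2.1 z, dist_self]
    exact ha
  obtain ⟨u, v, hu, -, h0u, hvv, huv⟩ :=
    generalized_tube_lemma isCompact_singleton isCompact_univ hWopen hsub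
  have h0 : (0 : ℝ) ∈ u := h0u rfl
  obtain ⟨R, hR, hball⟩ := Metric.isOpen_iff.1 hu 0 h0
  refine ⟨R / 2, by positivity, ?_⟩
  intro z t ht
  have htu : t ∈ u := by
    apply hball
    rw [Metric.mem_ball, Real.dist_eq, sub_zero]
    linarith [abs_nonneg t]
  have : (t, z) ∈ W := huv ⟨htu, hvv (mem_univ z)⟩
  exact le_of_lt this

/-- Uniform continuity of the flow over a compact time window. -/
lemma flow_uniform_cont
    (hφ : Continuous (fun p : ℝ × X => φ p.1 p.2) ∧ (∀ x : X, φ 0 x = x) ∧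
      ∀ t s : ℝ, ∀ x : X, φ (t + s) x = φ t (φ s x))
    {T a : ℝ} (hT : 0 < T) (ha : 0 < a) :
    ∃ θ > 0, ∀ p q : X, dist p q ≤ θ → ∀ t : ℝ, |t| ≤ T → dist (φ t p) (φ t q) ≤ a := by
  have hK : IsCompact ((Icc (-T) T : Set ℝ) ×ˢ (univ : Set X)) :=
    isCompact_Icc.prod isCompact_univ
  have hu := hK.uniformContinuousOn_of_continuous (hφ.1.continuousOn)
  rw [Metric.uniformContinuousOn_iff_le] at hu
  obtain ⟨θ, hθ, H⟩ := hu a ha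
  refine ⟨θ, hθ, ?_⟩
  intro p q hpq t ht
  have h1 : ((t, p) : ℝ × X) ∈ (Icc (-T) T : Set ℝ) ×ˢ (univ : Set X) :=
    ⟨abs_le.1 ht |> fun h => ⟨h.1, h.2⟩, mem_univ p⟩
  have h2 : ((t, q) : ℝ × X) ∈ (Icc (-T) T : Set ℝ) ×ˢ (univ : Set X) :=
    ⟨abs_le.1 ht |> fun h => ⟨h.1, h.2⟩, mem_univ q⟩
  have hd : dist ((t, p) : ℝ × X) ((t, q) : ℝ × X) ≤ θ := by
    rw [Prod.dist_eq]
    simp only [dist_self]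
    rw [max_eq_right dist_nonneg]
    exact hpq
  exact H _ h1 _ h2 hd

/-- Uniform separation: a finite set is uniformly discrete. -/
lemma exists_uniform_sep {S : Set X} (hfin : S.Finite) :
    ∃ d > (0:ℝ), ∀ a ∈ S, ∀ b ∈ S, dist a b < d → a = b := by
  classical
  by_cases hne : ({p : X × X | p.1 ∈ S ∧ p.2 ∈ S ∧ p.1 ≠ p.2}).Nonempty
  · obtain ⟨p₀, hp₀, hmin⟩ := Set.exists_min_image _ (fun p : X × X => dist p.1 p.2)
      ((hfin.prod hfin).subset (fun p hp => ⟨hp.1, hp.2.1⟩)) hne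
    refine ⟨dist p₀.1 p₀.2, dist_pos.2 hp₀.2.2, ?_⟩
    intro a ha b hb hlt
    by_contra hab
    exact absurd (hmin (a, b) ⟨ha, hb, hab⟩) (not_le.2 hlt)
  · refine ⟨1, one_pos, ?_⟩
    intro a ha b hb _
    by_contra hab
    exact hne ⟨(a, b), ha, hb, hab⟩

lemma distToSet_nonneg (z : X) (A : Set X) : 0 ≤ distToSet z A := by
  unfold distToSet
  split
  · exact Metric.diam_nonneg
  · exact Metric.infDist_nonneg

end AuxFlow2




section AuxFlow3

variable [MetricSpace X] [CompactSpace X] (φ : ℝ → X → X)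

lemma flow_zperiod' (hφ : Continuous (fun p : ℝ × X => φ p.1 p.2) ∧ (∀ x : X, φ 0 x = x) ∧
    ∀ t s : ℝ, ∀ x : X, φ (t + s) x = φ t (φ s x)) {p : ℝ} {z : X} (hp : φ p z = z) :
    ∀ k : ℤ, φ ((k : ℝ) * p) z = z := by
  have hneg : φ (-p) z = z := by
    conv_lhs => rw [← hp]
    rw [(hφ.2.2 (-p) p z).symm, neg_add_cancel, hφ.2.1]
  intro k
  induction k using Int.induction_on with
  | zero => simpa using hφ.2.1 z
  | succ k ih =>
      push_cast at ih ⊢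
      have h1 : ((k : ℝ) + 1) * p = p + (k : ℝ) * p := by ring
      rw [h1, hφ.2.2, ih, hp]
  | pred k ih =>
      push_cast at ih ⊢
      have h1 : (-(k : ℝ) - 1) * p = -p + (-(k : ℝ)) * p := by ring
      rw [h1, hφ.2.2]
      rw [show (-(k : ℝ)) * p = (-k : ℝ) * p by ring] at *
      rw [ih, hneg]

/-- No small periods for a fixed-point-free flow restricted to a compact set. -/
lemma flow_no_small_period
    (hφ : Continuous (fun p : ℝ × X => φ p.1 p.2) ∧ (∀ x : X, φ 0 x = x) ∧
      ∀ t s : ℝ, ∀ x : X, φ (t + s) x = φ t (φ s x))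
    (Y : Set X) (hYcomp : IsCompact Y)
    (hfix : ∀ z ∈ Y, ∃ t : ℝ, φ t z ≠ z) :
    ∃ T₀ > (0:ℝ), ∀ z ∈ Y, ∀ p : ℝ, 0 < p → p ≤ T₀ → φ p z ≠ z := by
  classical
  have key : ∀ z ∈ Y, ∃ η > (0:ℝ), ∃ V : Set X, V ∈ 𝓝 z ∧
      ∀ w ∈ V, ∀ p : ℝ, 0 < p → p ≤ η → φ p w ≠ w := by
    intro z hz
    obtain ⟨tz, htz⟩ := hfix z hz
    set a := dist (φ tz z) z with ha_def
    have ha : 0 < a := dist_pos.2 htz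
    -- (i) points near z still move at time tz
    have hcont1 : Continuous fun w : X => dist (φ tz w) w := by
      have : Continuous fun w : X => φ tz w := by
        have := hφ.1.comp (Continuous.prodMk_right tz)
        exact this
      exact this.dist continuous_id
    have hO1 : IsOpen {w : X | 2 * a / 3 < dist (φ tz w) w} :=
      isOpen_lt continuous_const hcont1
    have hzO1 : z ∈ {w : X | 2 * a / 3 < dist (φ tz w) w} := by
      simp only [mem_setOf_eq, ← ha_def]
      linarith
    -- (ii) small-time displacement is small near z
    have hΨ : Continuous fun p : ℝ × X => dist (φ p.1 p.2) p.2 :=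
      (hφ.1).dist continuous_snd
    have hWopen : IsOpen {p : ℝ × X | dist (φ p.1 p.2) p.2 < a / 3} :=
      isOpen_lt hΨ continuous_const
    have h0W : ((0 : ℝ), z) ∈ {p : ℝ × X | dist (φ p.1 p.2) p.2 < a / 3} := by
      simp only [mem_setOf_eq, hφ.2.1 z, dist_self]
      positivity
    obtain ⟨ρ, hρ, hball⟩ := Metric.isOpen_iff.1 hWopen _ h0W
    refine ⟨ρ / 2, by positivity, {w | 2 * a / 3 < dist (φ tz w) w} ∩ Metric.ball z ρ, ?_, ?_⟩
    · exact Filter.inter_mem (hO1.mem_nhds hzO1)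
        (Metric.ball_mem_nhds z hρ)
    · rintro w ⟨hw1, hw2⟩ p hp hpη
      intro hper
      set k := ⌊tz / p⌋ with hk
      set τ := tz - (k : ℝ) * p with hτ
      have hkle : (k : ℝ) * p ≤ tz := by
        rw [hk]
        have := Int.floor_le (tz / p)
        calc (⌊tz / p⌋ : ℝ) * p ≤ (tz / p) * p := by
              apply mul_le_mul_of_nonneg_right this hp.le
          _ = tz := by field_simp
      have hklt : tz < ((k : ℝ) + 1) * p := by
        rw [hk]
        have := Int.lt_floor_add_one (tz / p)
        calc tz = (tz / p) * p := by field_simp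
          _ < ((⌊tz / p⌋ : ℝ) + 1) * p := by
              apply mul_lt_mul_of_pos_right _ hp
              push_cast
              exact this
      have hτ0 : 0 ≤ τ := by rw [hτ]; linarith
      have hτp : τ < p := by rw [hτ]; nlinarith
      have hτρ : |τ| < ρ := by
        rw [abs_of_nonneg hτ0]
        linarith
      -- φ tz w = φ τ w
      have hzper := flow_zperiod' φ hφ hper k
      have heq : φ tz w = φ τ w := by
        have : tz = τ + (k : ℝ) * p := by rw [hτ]; ring
        rw [this, hφ.2.2, hzper]
      -- small displacement at time τ
      have hsmall : dist (φ τ w) w < a / 3 := by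
        have : ((τ, w) : ℝ × X) ∈ Metric.ball ((0 : ℝ), z) ρ := by
          rw [← ball_prod_same]
          constructor
          · rw [Metric.mem_ball, Real.dist_eq, sub_zero]; exact hτρ
          · exact hw2
        exact hball this
      simp only [mem_setOf_eq] at hw1
      rw [heq] at hw1
      linarith
  -- choice functions
  choose! η hη V hV hVprop using key
  obtain ⟨t, htY, hcover⟩ := hYcomp.elim_nhds_subcover V (fun z hz => hV z hz)
  by_cases htne : t.Nonempty
  · refine ⟨t.inf' htne η, ?_, ?_⟩
    · show (0:ℝ) < t.inf' htne η
      rw [Finset.lt_inf'_iff]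
      intro z hzt
      exact hη z (htY z hzt)
    · intro z hz p hp hpT
      obtain ⟨zi, hzi⟩ := Set.mem_iUnion₂.1 (hcover hz)
      obtain ⟨hzit, hzV⟩ := hzi
      exact hVprop zi (htY zi hzit) z hzV p hp
        (le_trans hpT (Finset.inf'_le η hzit))
  · refine ⟨1, one_pos, ?_⟩
    intro z hz p _ _
    exfalso
    have := hcover hz
    rw [Finset.not_nonempty_iff_eq_empty.1 htne] at this
    simpa using this

/-- Positive minimum displacement over an annulus of times, on a compact
fixed-point-free invariant-ish set. -/
lemma flow_annulus_min
    (hφ : Continuous (fun p : ℝ × X => φ p.1 p.2) ∧ (∀ x : X, φ 0 x = x) ∧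
      ∀ t s : ℝ, ∀ x : X, φ (t + s) x = φ t (φ s x))
    (Y : Set X) (hYcomp : IsCompact Y) (hYne : Y.Nonempty)
    {T₀ rr : ℝ} (hrr : 0 < rr) (hrT : rr ≤ T₀)
    (hnp : ∀ z ∈ Y, ∀ p : ℝ, 0 < p → p ≤ T₀ → φ p z ≠ z) :
    ∃ m > (0:ℝ), ∀ z ∈ Y, ∀ t : ℝ, rr ≤ |t| → |t| ≤ T₀ → m ≤ dist (φ t z) z := by
  set A : Set ℝ := Icc (-T₀) (-rr) ∪ Icc rr T₀ with hA
  have hAcomp : IsCompact A := isCompact_Icc.union isCompact_Icc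
  have hKcomp : IsCompact (A ×ˢ Y) := hAcomp.prod hYcomp
  obtain ⟨y₀, hy₀⟩ := hYne
  have hKne : (A ×ˢ Y).Nonempty := ⟨(rr, y₀), Or.inr ⟨le_refl rr, hrT⟩, hy₀⟩
  have hΨ : Continuous fun p : ℝ × X => dist (φ p.1 p.2) p.2 :=
    (hφ.1).dist continuous_snd
  obtain ⟨⟨t₀, z₀⟩, hmem, hmin⟩ := hKcomp.exists_isMinOn hKne hΨ.continuousOn
  have hne : φ t₀ z₀ ≠ z₀ := by
    rcases hmem.1 with h1 | h2
    · intro hcontra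
      have h3 : φ (-t₀) z₀ = z₀ := by
        conv_lhs => rw [← hcontra]
        rw [(hφ.2.2 (-t₀) t₀ z₀).symm, neg_add_cancel, hφ.2.1]
      exact hnp z₀ hmem.2 (-t₀) (by linarith [h1.2]) (by linarith [h1.1]) h3
    · exact hnp z₀ hmem.2 t₀ (by linarith [h2.1]) h2.2
  refine ⟨dist (φ t₀ z₀) z₀, dist_pos.2 hne, ?_⟩
  intro z hzY t h1 h2
  have htA : t ∈ A := by
    rcases le_or_gt 0 t with hsign | hsign
    · right
      rw [abs_of_nonneg hsign] at h1 h2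
      exact ⟨h1, h2⟩
    · left
      rw [abs_of_neg hsign] at h1 h2
      constructor <;> linarith
  exact hmin (Set.mk_mem_prod htA hzY)

end AuxFlow3

end Helpers

set_option maxHeartbeats 1000000

theorem singular_expansive_finitely_many_isolated_sing_expansive
    [MetricSpace X] [CompactSpace X] (φ : ℝ → X → X) (hφ : IsFlowMap φ)
    (h : SingularExpansiveOn φ Set.univ)
    (hsing : SingSet φ = ∅ ∨
      ((SingSet φ).Finite ∧ ∀ x ∈ SingSet φ, IsOpen ({x} : Set X))) :
    ExpansiveOn φ Set.univ := by
  classical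
  obtain ⟨hφc, hφ0, hφadd⟩ := id hφ
  have fadd : ∀ (a b : ℝ) (z : X), φ a (φ b z) = φ (a + b) z := fun a b z => (hφadd a b z).symm
  intro ε hε
  by_cases hsub : ∀ a b : X, a = b
  · exact ⟨1, one_pos, fun x _ y _ s _ _ _ =>
      ⟨0, ⟨by linarith, by linarith⟩, hsub y (φ 0 x)⟩⟩
  push_neg at hsub
  obtain ⟨p₁, p₂, hp12⟩ := hsub
  have hSopen : IsOpen (SingSet φ) := by
    rcases hsing with h0 | ⟨hfin, hiso⟩
    · rw [h0]; exact isOpen_empty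
    · have he : SingSet φ = ⋃ x ∈ SingSet φ, ({x} : Set X) := by simp
      rw [he]; exact isOpen_biUnion hiso
  have hYcomp : IsCompact ((SingSet φ)ᶜ) := hSopen.isClosed_compl.isCompact
  have hSfix : ∀ σ ∈ SingSet φ, ∀ t : ℝ, φ t σ = σ := fun σ hσ t => hσ t
  have hYinv : ∀ z ∈ (SingSet φ)ᶜ, ∀ t : ℝ, φ t z ∈ (SingSet φ)ᶜ := by
    intro z hz t hmem
    apply hz
    have hz_eq : z = φ t z := by
      have h1 : φ (-t) (φ t z) = z := by rw [fadd, neg_add_cancel, hφ0]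
      conv_lhs => rw [← h1]
      exact hSfix _ hmem (-t)
    intro u
    calc φ u z = φ u (φ t z) := by rw [← hz_eq]
      _ = φ t z := hSfix _ hmem u
      _ = z := hz_eq.symm
  have hfixY : ∀ z ∈ (SingSet φ)ᶜ, ∃ t : ℝ, φ t z ≠ z := by
    intro z hz
    by_contra hcon
    push_neg at hcon
    exact hz (fun t => hcon t)
  -- separation constants around the singular set
  have hr₀ex : ∃ r₀ > (0:ℝ), (∀ z ∈ (SingSet φ)ᶜ, r₀ ≤ distToSet z (SingSet φ)) ∧
      (∀ z ∈ (SingSet φ)ᶜ, ∀ σ ∈ SingSet φ, r₀ ≤ dist z σ) := by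
    by_cases hSe : SingSet φ = ∅
    · refine ⟨Metric.diam (univ : Set X), ?_, ?_, ?_⟩
      · have h1 : dist p₁ p₂ ≤ Metric.diam (univ : Set X) :=
          Metric.dist_le_diam_of_mem isCompact_univ.isBounded (mem_univ _) (mem_univ _)
        have h2 : 0 < dist p₁ p₂ := dist_pos.2 hp12
        linarith
      · intro z _
        rw [distToSet, if_pos hSe]
      · intro z _ σ hσ
        rw [hSe] at hσ
        exact absurd hσ (notMem_empty σ)
    · rcases hsing with h0 | ⟨hfin, hiso⟩
      · exact absurd h0 hSe
      have hrad : ∀ σ : X, ∃ rσ : ℝ, σ ∈ SingSet φ →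
          (0 < rσ ∧ ∀ w : X, dist w σ < rσ → w = σ) := by
        intro σ
        by_cases hσ : σ ∈ SingSet φ
        · obtain ⟨rσ, hrσ, hball⟩ := Metric.isOpen_iff.1 (hiso σ hσ) σ rfl
          refine ⟨rσ, fun _ => ⟨hrσ, fun w hw => ?_⟩⟩
          have := hball (Metric.mem_ball.2 hw)
          simpa using this
        · exact ⟨1, fun hc => absurd hc hσ⟩
      choose ρ hρ using hrad
      obtain ⟨σ₀, hσ₀S, hσ₀min⟩ := Set.exists_min_image (SingSet φ) ρ hfin
        (Set.nonempty_iff_ne_empty.2 hSe)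
      refine ⟨ρ σ₀, (hρ σ₀ hσ₀S).1, ?_, ?_⟩
      · intro z hz
        rw [distToSet, if_neg hSe]
        by_contra hlt
        push_neg at hlt
        obtain ⟨σ, hσS, hσd⟩ :=
          (Metric.infDist_lt_iff (Set.nonempty_iff_ne_empty.2 hSe)).1 hlt
        have h1 : ρ σ₀ ≤ ρ σ := hσ₀min σ hσS
        have h2 : z = σ := (hρ σ hσS).2 z (lt_of_lt_of_le hσd h1)
        exact hz (h2 ▸ hσS)
      · intro z hz σ hσ
        by_contra hlt
        push_neg at hlt
        have h1 : ρ σ₀ ≤ ρ σ := hσ₀min σ hσ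
        have h2 : z = σ := (hρ σ hσ).2 z (lt_of_lt_of_le hlt h1)
        exact hz (h2 ▸ hσ)
  obtain ⟨r₀, hr₀pos, hr₀dist, hr₀sep⟩ := hr₀ex
  have hdSex : ∃ dS > (0:ℝ), ∀ a ∈ SingSet φ, ∀ b ∈ SingSet φ, dist a b < dS → a = b := by
    rcases hsing with h0 | ⟨hfin, _⟩
    · refine ⟨1, one_pos, ?_⟩
      intro a ha
      rw [h0] at ha
      exact absurd ha (notMem_empty a)
    · exact exists_uniform_sep hfin
  obtain ⟨dS, hdSpos, hdSsep⟩ := hdSex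
  by_cases hYne : ((SingSet φ)ᶜ : Set X).Nonempty
  swap
  · -- every point is singular
    have hall : ∀ z : X, z ∈ SingSet φ := by
      intro z
      by_contra hz
      exact hYne ⟨z, hz⟩
    refine ⟨dS / 2, by positivity, ?_⟩
    intro x _ y _ s hscont hs0 hclose
    have h00 := hclose 0
    rw [hφ0 x, hs0, hφ0 y] at h00
    have hxy : x = y := hdSsep x (hall x) y (hall y) (by linarith)
    exact ⟨0, ⟨by linarith, by linarith⟩, by rw [hφ0 x]; exact hxy.symm⟩
  -- main case
  obtain ⟨T₀, hT₀, hnp⟩ := flow_no_small_period φ ⟨hφc, hφ0, hφadd⟩ _ hYcomp hfixY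
  have hε2pos : (0:ℝ) < min (ε / 2) (T₀ / 8) := lt_min (by linarith) (by linarith)
  set ε2 : ℝ := min (ε / 2) (T₀ / 8) with hε2def
  obtain ⟨δh0, hδh0, Hh⟩ := h ε2 hε2pos
  set δh : ℝ := min δh0 1 with hδhdef
  have hδhpos : 0 < δh := lt_min hδh0 one_pos
  have hδh1 : δh ≤ 1 := min_le_right _ _
  have hε2_le_ε : ε2 ≤ ε / 2 := min_le_left _ _
  have hε2_le_T : ε2 ≤ T₀ / 8 := min_le_right _ _
  obtain ⟨m1, hm1, hann1⟩ := flow_annulus_min φ ⟨hφc, hφ0, hφadd⟩ _ hYcomp hYne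
    hε2pos (by linarith) hnp
  obtain ⟨R1, hR1, hsmall1⟩ := flow_uniform_small φ ⟨hφc, hφ0, hφadd⟩
    (a := min (m1 / 2) (δh * r₀ / 2)) (lt_min (by linarith) (by positivity))
  set r : ℝ := min (min R1 (ε / 2)) (T₀ / 8) with hrdef
  have hrpos : 0 < r := lt_min (lt_min hR1 (by linarith)) (by linarith)
  have hr_le_R1 : r ≤ R1 := le_trans (min_le_left _ _) (min_le_left _ _)
  have hr_le_ε : r ≤ ε / 2 := le_trans (min_le_left _ _) (min_le_right _ _)
  have hr_le_T : r ≤ T₀ / 8 := min_le_right _ _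
  obtain ⟨m2, hm2, hann2⟩ := flow_annulus_min φ ⟨hφc, hφ0, hφadd⟩ _ hYcomp hYne
    hrpos (by linarith) hnp
  obtain ⟨R2, hR2, hsmall2⟩ := flow_uniform_small φ ⟨hφc, hφ0, hφadd⟩
    (a := m2 / 2) (by linarith)
  set L : ℝ := min R2 (T₀ / 8) with hLdef
  have hLpos : 0 < L := lt_min hR2 (by linarith)
  have hL_le_R2 : L ≤ R2 := min_le_left _ _
  have hL_le_T : L ≤ T₀ / 8 := min_le_right _ _
  obtain ⟨m3, hm3, hann3⟩ := flow_annulus_min φ ⟨hφc, hφ0, hφadd⟩ _ hYcomp hYne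
    hLpos (by linarith) hnp
  obtain ⟨Rν, hRν, hsmallν⟩ := flow_uniform_small φ ⟨hφc, hφ0, hφadd⟩
    (a := m3 / 4) (by linarith)
  obtain ⟨θ, hθpos, hΘ⟩ := flow_uniform_cont φ ⟨hφc, hφ0, hφadd⟩
    (T := L) (a := m3 / 4) hLpos (by linarith)
  set δ : ℝ := min (min (min (δh * r₀ / 2) (m2 / 8)) (min (m3 / 8) θ))
      (min (m1 / 8) (dS / 2)) with hδdef
  have hδpos : 0 < δ := by
    apply lt_min (lt_min (lt_min (by positivity) (by linarith)) (lt_min (by linarith) hθpos))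
      (lt_min (by linarith) (by linarith))
  have hδ1 : δ ≤ δh * r₀ / 2 :=
    le_trans (min_le_left _ _) (le_trans (min_le_left _ _) (min_le_left _ _))
  have hδ2 : δ ≤ m2 / 8 :=
    le_trans (min_le_left _ _) (le_trans (min_le_left _ _) (min_le_right _ _))
  have hδ3 : δ ≤ m3 / 8 :=
    le_trans (min_le_left _ _) (le_trans (min_le_right _ _) (min_le_left _ _))
  have hδ4 : δ ≤ θ :=
    le_trans (min_le_left _ _) (le_trans (min_le_right _ _) (min_le_right _ _))
  have hδ5 : δ ≤ m1 / 8 := le_trans (min_le_right _ _) (min_le_left _ _)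
  have hδ6 : δ ≤ dS / 2 := le_trans (min_le_right _ _) (min_le_right _ _)
  refine ⟨δ, hδpos, ?_⟩
  intro x _ y _ s hscont hs0 hclose
  have h00 := hclose 0
  rw [hφ0 x, hs0, hφ0 y] at h00
  by_cases hxS : x ∈ SingSet φ
  · by_cases hyS : y ∈ SingSet φ
    · have hxy : x = y := hdSsep x hxS y hyS (by linarith)
      exact ⟨0, ⟨by linarith, by linarith⟩, by rw [hφ0 x]; exact hxy.symm⟩
    · exfalso
      have hge : r₀ ≤ dist y x := hr₀sep y hyS x hxS
      rw [dist_comm] at hge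
      have hδr : δh * r₀ ≤ r₀ := by nlinarith
      linarith
  · by_cases hyS : y ∈ SingSet φ
    · exfalso
      have hge : r₀ ≤ dist x y := hr₀sep x hxS y hyS
      have hδr : δh * r₀ ≤ r₀ := by nlinarith
      linarith
    -- MAIN: both nonsingular
    have hxY : x ∈ (SingSet φ)ᶜ := hxS
    have hyY : y ∈ (SingSet φ)ᶜ := hyS
    have hzx : ∀ t : ℝ, φ t x ∈ (SingSet φ)ᶜ := fun t => hYinv x hxY t
    have hzy : ∀ t : ℝ, φ t y ∈ (SingSet φ)ᶜ := fun t => hYinv y hyY t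
    -- A. window control
    have hA : ∀ t t' : ℝ, |t' - t| ≤ L → |s t' - s t| ≤ r := by
      intro t t' htt
      by_contra hgt
      push_neg at hgt
      have hfc : ContinuousOn (fun l : ℝ => |s (t + l * (t' - t)) - s t|) (Icc 0 1) :=
        (((hscont.comp (continuous_const.add (continuous_id.mul continuous_const))).sub
          continuous_const).abs).continuousOn
      have hmemIcc : r ∈ Icc (|s (t + 0 * (t' - t)) - s t|) (|s (t + 1 * (t' - t)) - s t|) := by
        constructor
        · simp [hrpos.le]
        · simp only [one_mul, add_sub_cancel]
          exact hgt.le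
      obtain ⟨l, hl, hfl⟩ := intermediate_value_Icc zero_le_one hfc hmemIcc
      set t'' := t + l * (t' - t) with ht''def
      have htt'' : |t'' - t| ≤ L := by
        have e : t'' - t = l * (t' - t) := by rw [ht''def]; ring
        rw [e, abs_mul]
        calc |l| * |t' - t| ≤ 1 * |t' - t| := by
              apply mul_le_mul_of_nonneg_right _ (abs_nonneg _)
              rw [abs_of_nonneg hl.1]
              exact hl.2
          _ ≤ L := by rw [one_mul]; exact htt
      have hu_abs : |s t'' - s t| = r := hfl
      have hw : φ (s t) y ∈ (SingSet φ)ᶜ := hzy (s t)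
      have hlow : m2 ≤ dist (φ (s t'') y) (φ (s t) y) := by
        have heq1 : φ (s t'') y = φ (s t'' - s t) (φ (s t) y) := by
          rw [fadd]; congr 1; ring
        rw [heq1]
        exact hann2 (φ (s t) y) hw (s t'' - s t) (le_of_eq hu_abs.symm)
          (by rw [hu_abs]; linarith)
      have hx'' : dist (φ t'' x) (φ t x) ≤ m2 / 2 := by
        have heq2 : φ t'' x = φ (t'' - t) (φ t x) := by rw [fadd]; congr 1; ring
        rw [heq2]
        exact hsmall2 (φ t x) (t'' - t) (le_trans htt'' hL_le_R2)
      have hup : dist (φ (s t'') y) (φ (s t) y) ≤ δ + (m2 / 2 + δ) := by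
        calc dist (φ (s t'') y) (φ (s t) y)
            ≤ dist (φ (s t'') y) (φ t'' x) + dist (φ t'' x) (φ t x)
              + dist (φ t x) (φ (s t) y) := dist_triangle4 _ _ _ _
          _ ≤ δ + (m2 / 2 + δ) := by
              have e1 : dist (φ (s t'') y) (φ t'' x) = dist (φ t'' x) (φ (s t'') y) :=
                dist_comm _ _
              rw [e1]
              linarith [hclose t'', hclose t, hx'']
      linarith
    -- B. uniform advance
    have hB : ∀ t : ℝ, Rν ≤ s (t + L) - s t := by
      intro t
      have hu_r : |s (t + L) - s t| ≤ r := by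
        apply hA
        rw [add_sub_cancel_left, abs_of_pos hLpos]
      have hw : φ (s t) y ∈ (SingSet φ)ᶜ := hzy (s t)
      have hzt : φ t x ∈ (SingSet φ)ᶜ := hzx t
      have h1 : m3 ≤ dist (φ (t + L) x) (φ t x) := by
        have heq : φ (t + L) x = φ L (φ t x) := by rw [fadd]; congr 1; ring
        rw [heq]
        exact hann3 (φ t x) hzt L (by rw [abs_of_pos hLpos])
          (by rw [abs_of_pos hLpos]; linarith)
      have h4 : dist (φ (s (t + L)) y) (φ (s t) y)
          = dist (φ (s (t + L) - s t) (φ (s t) y)) (φ (s t) y) := by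
        congr 1
        rw [fadd]; congr 1; ring
      have h2 : dist (φ (t + L) x) (φ t x)
          ≤ δ + (dist (φ (s (t + L)) y) (φ (s t) y) + δ) := by
        calc dist (φ (t + L) x) (φ t x)
            ≤ dist (φ (t + L) x) (φ (s (t + L)) y)
              + dist (φ (s (t + L)) y) (φ (s t) y)
              + dist (φ (s t) y) (φ t x) := dist_triangle4 _ _ _ _
          _ ≤ δ + (dist (φ (s (t + L)) y) (φ (s t) y) + δ) := by
              have e1 : dist (φ (s t) y) (φ t x) = dist (φ t x) (φ (s t) y) := dist_comm _ _
              rw [e1]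
              linarith [hclose (t + L), hclose t]
      have h5 : Rν < |s (t + L) - s t| := by
        by_contra hle
        push_neg at hle
        have h6 := hsmallν (φ (s t) y) (s (t + L) - s t) hle
        rw [← h4] at h6
        linarith
      rcases le_or_gt 0 (s (t + L) - s t) with hpos | hneg
      · rw [abs_of_nonneg hpos] at h5
        linarith
      · exfalso
        have hu_low : -r ≤ s (t + L) - s t := neg_le_of_abs_le hu_r
        have hq : φ (s (t + L)) y ∈ (SingSet φ)ᶜ := hzy (s (t + L))
        have h6 : m3 ≤ dist (φ L (φ (s t) y)) (φ (s (t + L)) y) := by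
          have heq : φ L (φ (s t) y) = φ (L - (s (t + L) - s t)) (φ (s (t + L)) y) := by
            rw [fadd, fadd]; congr 1; ring
          rw [heq]
          apply hann3 (φ (s (t + L)) y) hq (L - (s (t + L) - s t))
          · rw [abs_of_pos (by linarith)]
            linarith
          · rw [abs_of_pos (by linarith)]
            linarith
        have h7 : dist (φ L (φ (s t) y)) (φ L (φ t x)) ≤ m3 / 4 := by
          apply hΘ _ _ _ L (by rw [abs_of_pos hLpos])
          rw [dist_comm]
          exact le_trans (hclose t) hδ4
        have h8 : dist (φ L (φ t x)) (φ (s (t + L)) y) ≤ δ := by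
          have e1 : φ L (φ t x) = φ (t + L) x := by rw [fadd]; congr 1; ring
          rw [e1]
          exact hclose (t + L)
        have h9 := dist_triangle (φ L (φ (s t) y)) (φ L (φ t x)) (φ (s (t + L)) y)
        linarith
    -- C. the monotonized reparametrization
    have hFc : Continuous (fun t : ℝ => ∫ v in (0:ℝ)..t, s v) :=
      intervalIntegral.continuous_primitive (fun a b => hscont.intervalIntegrable a b) 0
    set F : ℝ → ℝ := fun t => ∫ v in (0:ℝ)..t, s v with hFdef
    set uu : ℝ → ℝ := fun t => (F (t + L) - F t) / L with huudef
    have huuc : Continuous uu :=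
      ((hFc.comp (continuous_id.add continuous_const)).sub hFc).div_const L
    have hFint : ∀ t₁ t₂ : ℝ, F t₂ - F t₁ = ∫ v in t₁..t₂, s v := by
      intro t₁ t₂
      have := intervalIntegral.integral_add_adjacent_intervals
        (hscont.intervalIntegrable (μ := MeasureTheory.volume) 0 t₁)
        (hscont.intervalIntegrable (μ := MeasureTheory.volume) t₁ t₂)
      simp only [hFdef]
      linarith
    have hdiff : ∀ t₁ t₂ : ℝ, t₁ ≤ t₂ → Rν * (t₂ - t₁) / L ≤ uu t₂ - uu t₁ := by
      intro t₁ t₂ h12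
      have e1 : uu t₂ - uu t₁ = ((F (t₂ + L) - F (t₁ + L)) - (F t₂ - F t₁)) / L := by
        simp only [huudef]; ring
      have e2 : F (t₂ + L) - F (t₁ + L) = ∫ v in t₁..t₂, s (v + L) := by
        rw [hFint (t₁ + L) (t₂ + L), intervalIntegral.integral_comp_add_right s L]
      have e3 : F t₂ - F t₁ = ∫ v in t₁..t₂, s v := hFint t₁ t₂
      have hs2 : Continuous fun v : ℝ => s (v + L) := hscont.comp (continuous_add_right L)
      have e5 : (∫ v in t₁..t₂, s (v + L)) - ∫ v in t₁..t₂, s v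
          = ∫ v in t₁..t₂, (s (v + L) - s v) := by
        rw [intervalIntegral.integral_sub (hs2.intervalIntegrable t₁ t₂)
          (hscont.intervalIntegrable t₁ t₂)]
      have e6 : Rν * (t₂ - t₁) ≤ ∫ v in t₁..t₂, (s (v + L) - s v) := by
        have hm := intervalIntegral.integral_mono_on (μ := MeasureTheory.volume) h12
          (intervalIntegrable_const (c := Rν))
          ((hs2.sub hscont).intervalIntegrable t₁ t₂)
          (fun v _ => hB v)
        rw [intervalIntegral.integral_const, smul_eq_mul] at hm
        calc Rν * (t₂ - t₁) = (t₂ - t₁) * Rν := by ring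
          _ ≤ _ := hm
      rw [e1, e2, e3, e5]
      exact (div_le_div_iff_of_pos_right hLpos).2 e6
    have humono : StrictMono uu := by
      intro t₁ t₂ h12
      have h1 := hdiff t₁ t₂ h12.le
      have h2 : 0 < Rν * (t₂ - t₁) / L := by
        apply div_pos _ hLpos
        have : 0 < t₂ - t₁ := by linarith [h12]
        positivity
      linarith
    have hubound : ∀ t : ℝ, |uu t - s t| ≤ r := by
      intro t
      have e8 : ∫ v in t..(t + L), (s v - s t)
          = (F (t + L) - F t) - L * s t := by
        rw [intervalIntegral.integral_sub (hscont.intervalIntegrable _ _)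
          (intervalIntegrable_const (c := s t)), intervalIntegral.integral_const,
          ← hFint t (t + L)]
        rw [smul_eq_mul, add_sub_cancel_left]
      have e7 : uu t - s t = (∫ v in t..(t + L), (s v - s t)) / L := by
        rw [e8]
        show (F (t + L) - F t) / L - s t = (F (t + L) - F t - L * s t) / L
        field_simp
      rw [e7, abs_div, abs_of_pos hLpos, div_le_iff₀ hLpos]
      have hnorm : ‖∫ v in t..(t + L), (s v - s t)‖ ≤ r * |t + L - t| := by
        apply intervalIntegral.norm_integral_le_of_norm_le_const
        intro v hv
        rw [Set.uIoc_of_le (by linarith : t ≤ t + L)] at hv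
        rw [Real.norm_eq_abs]
        apply hA
        rw [abs_of_nonneg (by linarith [hv.1] : (0:ℝ) ≤ v - t)]
        linarith [hv.2]
      rw [Real.norm_eq_abs, add_sub_cancel_left, abs_of_pos hLpos] at hnorm
      linarith
    have husurj : Function.Surjective uu := by
      apply Continuous.surjective huuc
      · apply Filter.tendsto_atTop_mono' atTop
          (f₁ := fun t : ℝ => uu 0 + Rν * t / L)
        · filter_upwards [Filter.eventually_ge_atTop (0:ℝ)] with t ht
          have := hdiff 0 t ht
          simp only [sub_zero] at this
          linarith
        · apply Filter.tendsto_atTop_add_const_left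
          have h1 : Filter.Tendsto (fun t : ℝ => (Rν / L) * t) atTop atTop := by
            apply Filter.Tendsto.const_mul_atTop (by positivity) Filter.tendsto_id
          have he : (fun t : ℝ => Rν * t / L) = fun t : ℝ => (Rν / L) * t := by
            funext t; ring
          rw [he]
          exact h1
      · apply Filter.tendsto_atBot_mono' atBot
          (f₁ := fun t : ℝ => uu 0 + Rν * t / L)
        · filter_upwards [Filter.eventually_le_atBot (0:ℝ)] with t ht
          have h2 := hdiff t 0 ht
          have e : Rν * (0 - t) / L = -(Rν * t / L) := by ring
          rw [e] at h2
          show uu t ≤ uu 0 + Rν * t / L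
          linarith
        · apply Filter.tendsto_atBot_add_const_left
          have h1 : Filter.Tendsto (fun t : ℝ => (Rν / L) * t) atBot atBot := by
            apply Filter.Tendsto.const_mul_atBot (by positivity) Filter.tendsto_id
          have he : (fun t : ℝ => Rν * t / L) = fun t : ℝ => (Rν / L) * t := by
            funext t; ring
          rw [he]
          exact h1
    have hIH : IncreasingHomeo uu := ⟨huuc, humono, humono.injective, husurj⟩
    -- matched closeness for uu
    have hmatch : ∀ t : ℝ, dist (φ t x) (φ (uu t) y)
        ≤ δ + min (m1 / 2) (δh * r₀ / 2) := by
      intro t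
      have h1 : dist (φ (uu t) y) (φ (s t) y) ≤ min (m1 / 2) (δh * r₀ / 2) := by
        have heq : φ (uu t) y = φ (uu t - s t) (φ (s t) y) := by
          rw [fadd]; congr 1; ring
        rw [heq]
        exact hsmall1 (φ (s t) y) (uu t - s t) (le_trans (hubound t) hr_le_R1)
      calc dist (φ t x) (φ (uu t) y)
          ≤ dist (φ t x) (φ (s t) y) + dist (φ (s t) y) (φ (uu t) y) := dist_triangle _ _ _
        _ ≤ δ + min (m1 / 2) (δh * r₀ / 2) := by
            rw [dist_comm (φ (s t) y)]
            linarith [hclose t, h1]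
    -- D. apply singular expansivity
    have hpre : ∀ t : ℝ, dist (φ t x) (φ (uu t) y)
        ≤ δh0 * distToSet (φ t x) (SingSet φ) := by
      intro t
      have h2 : δh * r₀ ≤ δh * distToSet (φ t x) (SingSet φ) :=
        mul_le_mul_of_nonneg_left (hr₀dist _ (hzx t)) hδhpos.le
      have h3 : δh * distToSet (φ t x) (SingSet φ)
          ≤ δh0 * distToSet (φ t x) (SingSet φ) :=
        mul_le_mul_of_nonneg_right (min_le_left _ _) (distToSet_nonneg _ _)
      have h4 := hmatch t
      have h5 : min (m1 / 2) (δh * r₀ / 2) ≤ δh * r₀ / 2 := min_le_right _ _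
      linarith
    obtain ⟨t₀, τ, hτmem, heqτ⟩ := Hh x (mem_univ x) y (mem_univ y) uu hIH hpre
    -- E. conclude
    have hyc : y = φ (τ - uu t₀) x := by
      have h1 : φ (-(uu t₀)) (φ (uu t₀) y) = y := by
        rw [fadd, neg_add_cancel, hφ0]
      rw [← h1, heqτ, fadd]
      congr 1
      ring
    have hδtil : δ + min (m1 / 2) (δh * r₀ / 2) < m1 := by
      have h5 : min (m1 / 2) (δh * r₀ / 2) ≤ m1 / 2 := min_le_left _ _
      linarith
    have hself : ∀ t : ℝ, dist (φ t x) (φ (uu t + (τ - uu t₀) - t) (φ t x))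
        ≤ δ + min (m1 / 2) (δh * r₀ / 2) := by
      intro t
      have e1 : φ (uu t + (τ - uu t₀) - t) (φ t x) = φ (uu t) y := by
        rw [fadd, hyc, fadd]
        congr 1
        ring
      rw [e1]
      exact hmatch t
    have hexcl : ∀ t : ℝ, ¬ (ε2 ≤ |uu t + (τ - uu t₀) - t| ∧ |uu t + (τ - uu t₀) - t| ≤ T₀) := by
      rintro t ⟨hg1, hg2⟩
      have h3 := hann1 (φ t x) (hzx t) (uu t + (τ - uu t₀) - t) hg1 hg2
      have h4 := hself t
      rw [dist_comm] at h4
      linarith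
    have hgt₀ : |uu t₀ + (τ - uu t₀) - t₀| ≤ ε2 := by
      have e : uu t₀ + (τ - uu t₀) - t₀ = τ - t₀ := by ring
      rw [e, abs_le]
      obtain ⟨ha1, ha2⟩ := hτmem
      constructor <;> linarith
    have hgc : Continuous (fun t : ℝ => |uu t + (τ - uu t₀) - t|) :=
      ((huuc.add continuous_const).sub continuous_id).abs
    have hghalf : ∀ t : ℝ, |uu t + (τ - uu t₀) - t| < T₀ / 2 := by
      intro t₁
      by_contra hge
      push_neg at hge
      have hmemI : T₀ / 2 ∈ uIcc (|uu t₀ + (τ - uu t₀) - t₀|) (|uu t₁ + (τ - uu t₀) - t₁|) := by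
        rw [Set.mem_uIcc]
        left
        constructor
        · linarith
        · exact hge
      obtain ⟨t₂, _, hval⟩ := intermediate_value_uIcc hgc.continuousOn hmemI
      have hval' : |uu t₂ + (τ - uu t₀) - t₂| = T₀ / 2 := hval
      apply hexcl t₂
      constructor
      · rw [hval']; linarith
      · rw [hval']; linarith
    have hgsmall : ∀ t : ℝ, |uu t + (τ - uu t₀) - t| < ε2 := by
      intro t
      by_contra hge
      push_neg at hge
      exact hexcl t ⟨hge, by linarith [hghalf t]⟩
    have hc_bound : |τ - uu t₀| < ε2 + r := by
      have h1 : |uu 0 + (τ - uu t₀) - 0| < ε2 := hgsmall 0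
      have h2 : |uu 0 - s 0| ≤ r := hubound 0
      rw [hs0, sub_zero] at h2
      calc |τ - uu t₀| = |(uu 0 + (τ - uu t₀) - 0) - uu 0| := by congr 1; ring
        _ ≤ |uu 0 + (τ - uu t₀) - 0| + |uu 0| := abs_sub _ _
        _ < ε2 + r := by linarith
    refine ⟨τ - uu t₀, ⟨?_, ?_⟩, hyc⟩
    · have := neg_abs_le (τ - uu t₀)
      linarith
    · have := le_abs_self (τ - uu t₀)
      linarith
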